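/- Let δ', a, b be real numbers and let q, r be nonzero complex numbers with q² ≠ 1, q⁴ ≠ 1, and δ' ≠ 1, satisfying the three BMW parameter equations: δ' = (r−r⁻¹)/(q−q⁻¹) + 1, a = ((r·q − r⁻¹·q⁻¹ + q² − q⁻²)(r − r⁻¹))/((q² − q⁻²)(q − q⁻¹)), and b = ((r·q⁻¹ − r⁻¹·q + q² − q⁻²)(r − r⁻¹))/((q² − q⁻²)(q − q⁻¹)). Then: (i) if q is real, then r is real; and (ii) if |q| = 1, then |r| = 1. -/

import Mathlib

/-- Under the BMW parameter equations, if `q` is real then `r` is real, and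
if `|q| = 1` then `|r| = 1`. -/
theorem stmt_4 (δ' a b : ℝ) (q r : ℂ) (hq : q ≠ 0) (hr : r ≠ 0)
    (hq2 : q ^ 2 ≠ 1) (hq4 : q ^ 4 ≠ 1) (hδ : δ' ≠ 1)
    (h1 : (δ' : ℂ) = (r - r⁻¹) / (q - q⁻¹) + 1)
    (h2 : (a : ℂ) = ((r * q - r⁻¹ * q⁻¹ + q ^ 2 - q⁻¹ ^ 2) * (r - r⁻¹)) /
      ((q ^ 2 - q⁻¹ ^ 2) * (q - q⁻¹)))
    (h3 : (b : ℂ) = ((r * q⁻¹ - r⁻¹ * q + q ^ 2 - q⁻¹ ^ 2) * (r - r⁻¹)) /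
      ((q ^ 2 - q⁻¹ ^ 2) * (q - q⁻¹))) :
    (q.im = 0 → r.im = 0) ∧ (‖q‖ = 1 → ‖r‖ = 1) := by
  have hqi : q * q⁻¹ = 1 := mul_inv_cancel₀ hq
  have hu : q - q⁻¹ ≠ 0 := by
    intro h
    exact hq2 (by linear_combination q * h + hqi)
  have hv : q ^ 2 - q⁻¹ ^ 2 ≠ 0 := by
    intro h
    exact hq4 (by linear_combination q ^ 2 * h + (q * q⁻¹ + 1) * hqi)
  have hD : (q ^ 2 - q⁻¹ ^ 2) * (q - q⁻¹) ≠ 0 := mul_ne_zero hv hu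
  have hδc : ((δ' : ℂ) - 1) ≠ 0 := by
    intro h
    apply hδ
    have : (δ' : ℂ) = (1 : ℝ) := by push_cast; linear_combination h
    exact_mod_cast this
  -- key relation A : r - r⁻¹ = (δ' - 1)(q - q⁻¹)
  have hA : r - r⁻¹ = ((δ' : ℂ) - 1) * (q - q⁻¹) := by
    have h1' : (r - r⁻¹) / (q - q⁻¹) = (δ' : ℂ) - 1 := by linear_combination -h1
    exact (div_eq_iff hu).1 h1'
  -- clear denominators in h2, h3
  have h2' : (r * q - r⁻¹ * q⁻¹ + q ^ 2 - q⁻¹ ^ 2) * (r - r⁻¹)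
      = (a : ℂ) * ((q ^ 2 - q⁻¹ ^ 2) * (q - q⁻¹)) := (div_eq_iff hD).1 h2.symm
  have h3' : (r * q⁻¹ - r⁻¹ * q + q ^ 2 - q⁻¹ ^ 2) * (r - r⁻¹)
      = (b : ℂ) * ((q ^ 2 - q⁻¹ ^ 2) * (q - q⁻¹)) := (div_eq_iff hD).1 h3.symm
  -- key relation B : (δ' - 1)(r + r⁻¹) = (a - b)(q + q⁻¹)
  have hB : ((δ' : ℂ) - 1) * (r + r⁻¹) = ((a : ℂ) - b) * (q + q⁻¹) := by
    have hBG : (((δ' : ℂ) - 1) * (r + r⁻¹)) * ((q ^ 2 - q⁻¹ ^ 2) * (q - q⁻¹))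
        = (((a : ℂ) - b) * (q + q⁻¹)) * ((q ^ 2 - q⁻¹ ^ 2) * (q - q⁻¹)) := by
      linear_combination (q + q⁻¹) * (h2' - h3')
        - (r + r⁻¹) * (q - q⁻¹) * (q + q⁻¹) * hA
    exact mul_right_cancel₀ hD hBG
  -- expression for 2 r (δ' - 1) and 2 r⁻¹ (δ' - 1)
  have hR : 2 * r * ((δ' : ℂ) - 1)
      = ((δ' : ℂ) - 1) ^ 2 * (q - q⁻¹) + ((a : ℂ) - b) * (q + q⁻¹) := by
    linear_combination ((δ' : ℂ) - 1) * hA + hB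
  have hRinv : 2 * r⁻¹ * ((δ' : ℂ) - 1)
      = -(((δ' : ℂ) - 1) ^ 2 * (q - q⁻¹)) + ((a : ℂ) - b) * (q + q⁻¹) := by
    linear_combination hB - ((δ' : ℂ) - 1) * hA
  constructor
  · intro hqim
    have hcq : (starRingEnd ℂ) q = q := Complex.conj_eq_iff_im.2 hqim
    have hcq' : (starRingEnd ℂ) q⁻¹ = q⁻¹ := by rw [map_inv₀, hcq]
    have hc := congrArg (starRingEnd ℂ) hR
    simp only [map_mul, map_add, map_sub, map_pow, map_ofNat, map_one, hcq, hcq',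
      Complex.conj_ofReal] at hc
    have hcr : (starRingEnd ℂ) r = r := by
      have h' := hc.trans hR.symm
      have h'' := mul_right_cancel₀ hδc h'
      exact mul_left_cancel₀ (two_ne_zero) h''
    exact Complex.conj_eq_iff_im.1 hcr
  · intro habs
    have hcq : (starRingEnd ℂ) q = q⁻¹ := by
      rw [Complex.inv_def, Complex.normSq_eq_norm_sq, habs]
      simp
    have hcq' : (starRingEnd ℂ) q⁻¹ = q := by rw [map_inv₀, hcq, inv_inv]
    have hc := congrArg (starRingEnd ℂ) hR
    simp only [map_mul, map_add, map_sub, map_pow, map_ofNat, map_one, hcq, hcq',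
      Complex.conj_ofReal] at hc
    have hcr : (starRingEnd ℂ) r = r⁻¹ := by
      have h' : 2 * (starRingEnd ℂ) r * ((δ' : ℂ) - 1)
          = 2 * r⁻¹ * ((δ' : ℂ) - 1) := by
        rw [hRinv]; linear_combination hc
      have h'' := mul_right_cancel₀ hδc h'
      exact mul_left_cancel₀ (two_ne_zero) h''
    have hnorm : Complex.normSq r = 1 := by
      have h := Complex.mul_conj r
      rw [hcr, mul_inv_cancel₀ hr] at h
      exact_mod_cast h.symm
    have hsq : ‖r‖ ^ 2 = 1 := by rw [Complex.sq_norm, hnorm]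
    nlinarith [norm_nonneg r]
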